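/- arXiv:1903.08497 — 3 statements merged into one kernel-verified Lean document; each statement's English description precedes it below -/
import Mathlib

section
/- Let A be a symmetric n×n real matrix, b ∈ ℝⁿ, Δ > 0, and f(x) = (1/2)xᵀAx − bᵀx. A point x̂ with ‖x̂‖ ≤ Δ is a global minimizer of f over the closed ball {x : ‖x‖ ≤ Δ} if and only if there exists a scalar μ* such that: (a) (A + μ*I)x̂ = b; (b) A + μ*I is positive semidefinite; and (c) either ‖x̂‖ ≤ Δ and μ* = 0, or ‖x̂‖ = Δ and μ* ≥ 0. -/
set_option maxHeartbeats 1000000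
open scoped RealInnerProductSpace

section Aux
lemma aux_nonneg (c : ℝ) (q : ℝ → ℝ) (B : ℝ)
    (hq : ∀ t : ℝ, 0 < t → t ≤ 1 → q t ≤ B)
    (h : ∀ t : ℝ, 0 < t → t ≤ 1 → 0 ≤ c + t * q t) : 0 ≤ c := by
  by_contra hc
  push_neg at hc
  have hB'pos : (0:ℝ) < max B 0 + 1 := by positivity
  have h1 : 0 < (-c) / (2 * (max B 0 + 1)) := div_pos (by linarith) (by positivity)
  obtain ⟨t0, ht0⟩ : ∃ t0, t0 = min 1 ((-c) / (2 * (max B 0 + 1))) := ⟨_, rfl⟩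
  have ht0pos : 0 < t0 := ht0 ▸ lt_min one_pos h1
  have ht0le : t0 ≤ 1 := ht0 ▸ min_le_left _ _
  have hqt : q t0 ≤ max B 0 + 1 := le_trans (hq t0 ht0pos ht0le)
    (by linarith [le_max_left B 0])
  have h2 := h t0 ht0pos ht0le
  have h3 : t0 * q t0 ≤ t0 * (max B 0 + 1) := by nlinarith
  have h4 : t0 ≤ (-c) / (2 * (max B 0 + 1)) := ht0 ▸ min_le_right _ _
  have h5 : t0 * (max B 0 + 1) ≤ (-c) / (2 * (max B 0 + 1)) * (max B 0 + 1) := by nlinarith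
  have h6 : (-c) / (2 * (max B 0 + 1)) * (max B 0 + 1) = -c / 2 := by field_simp
  linarith

lemma aux_poly0 (c e1 e2 : ℝ)
    (h : ∀ t : ℝ, 0 < t → t ≤ 1 → 0 ≤ c + e1 * t + e2 * t ^ 2) : 0 ≤ c := by
  refine aux_nonneg c (fun t => e1 + e2 * t) (|e1| + |e2|) (fun t ht ht1 => ?_)
    (fun t ht ht1 => ?_)
  · nlinarith [le_abs_self e1, le_abs_self e2, abs_nonneg e2]
  · have := h t ht ht1; nlinarith

lemma aux_poly (c e2 e3 e4 : ℝ)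
    (h : ∀ t : ℝ, 0 < t → t ≤ 1 → 0 ≤ c * t + e2 * t ^ 2 + e3 * t ^ 3 + e4 * t ^ 4) :
    0 ≤ c := by
  refine aux_nonneg c (fun t => e2 + e3 * t + e4 * t ^ 2) (|e2| + |e3| + |e4|)
    (fun t ht ht1 => ?_) (fun t ht ht1 => ?_)
  · have b3 : e3 * t ≤ |e3| := by nlinarith [le_abs_self e3, abs_nonneg e3]
    have ht2 : t ^ 2 ≤ 1 := by nlinarith
    have b4 : e4 * t ^ 2 ≤ |e4| := by nlinarith [le_abs_self e4, abs_nonneg e4, sq_nonneg t]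
    nlinarith [le_abs_self e2]
  · have h2 := h t ht ht1
    by_contra hx
    push_neg at hx
    nlinarith
end Aux

variable {F : Type*} [NormedAddCommGroup F] [InnerProductSpace ℝ F]

theorem abstract_tr (T : F →ₗ[ℝ] F) (hsym : ∀ x y : F, ⟪T x, y⟫ = ⟪x, T y⟫)
    (b : F) (Δ : ℝ) (hΔ : 0 < Δ) (xhat : F) (hxhat : ‖xhat‖ ≤ Δ) :
    (∀ x : F, ‖x‖ ≤ Δ →
        (1/2) * ⟪xhat, T xhat⟫ - ⟪b, xhat⟫ ≤ (1/2) * ⟪x, T x⟫ - ⟪b, x⟫) ↔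
      ∃ μ : ℝ, (T xhat + μ • xhat = b) ∧ (∀ d : F, 0 ≤ ⟪d, T d⟫ + μ * ⟪d, d⟫) ∧
        ((‖xhat‖ ≤ Δ ∧ μ = 0) ∨ (‖xhat‖ = Δ ∧ 0 ≤ μ)) := by
  have hexp : ∀ h : F, (1/2) * ⟪xhat + h, T (xhat + h)⟫ - ⟪b, xhat + h⟫ =
      ((1/2) * ⟪xhat, T xhat⟫ - ⟪b, xhat⟫) + (⟪T xhat - b, h⟫ + (1/2) * ⟪h, T h⟫) := by
    intro h
    simp only [map_add, inner_add_left, inner_add_right, inner_sub_left]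
    linear_combination (-1/2 : ℝ) * (real_inner_comm h (T xhat)) - (1/2 : ℝ) * (hsym xhat h)
  have hnorm : ∀ y : F, ⟪y, y⟫ ≤ Δ ^ 2 → ‖y‖ ≤ Δ := by
    intro y hy
    rw [real_inner_self_eq_norm_sq] at hy
    nlinarith [norm_nonneg y]
  constructor
  · intro hmin
    have key : ∀ h : F, ‖xhat + h‖ ≤ Δ → 0 ≤ ⟪T xhat - b, h⟫ + (1/2) * ⟪h, T h⟫ := by
      intro h hh
      have := hmin (xhat + h) hh
      rw [hexp h] at this
      linarith
    rcases lt_or_eq_of_le hxhat with hlt | heqΔ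
    · -- interior case: μ = 0
      have gd : ∀ d : F, 0 ≤ ⟪T xhat - b, d⟫ := by
        intro d
        have hd1 : (0:ℝ) < ‖d‖ + 1 := by positivity
        have hβ : 0 < (Δ - ‖xhat‖) / (‖d‖ + 1) := div_pos (by linarith) hd1
        have hcan : (Δ - ‖xhat‖) / (‖d‖ + 1) * (‖d‖ + 1) = Δ - ‖xhat‖ :=
          div_mul_cancel₀ _ (ne_of_gt hd1)
        have hkey : ∀ t : ℝ, 0 < t → t ≤ 1 →
            0 ≤ ((Δ - ‖xhat‖) / (‖d‖ + 1) * ⟪T xhat - b, d⟫) * t +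
              (((Δ - ‖xhat‖) / (‖d‖ + 1))^2 * ((1/2) * ⟪d, T d⟫)) * t ^ 2 +
              0 * t ^ 3 + 0 * t ^ 4 := by
          intro t ht ht1
          have hball : ‖xhat + (t * ((Δ - ‖xhat‖) / (‖d‖ + 1))) • d‖ ≤ Δ := by
            refine le_trans (norm_add_le _ _) ?_
            rw [norm_smul, Real.norm_eq_abs,
              abs_of_pos (by positivity : 0 < t * ((Δ - ‖xhat‖) / (‖d‖ + 1)))]
            nlinarith [norm_nonneg d, mul_nonneg hβ.le (norm_nonneg d)]
          have h2 := key _ hball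
          rw [real_inner_smul_right, map_smul, real_inner_smul_left,
            real_inner_smul_right] at h2
          nlinarith [h2]
        have h3 := aux_poly _ _ _ _ hkey
        by_contra hx
        push_neg at hx
        nlinarith
      have hg0 : T xhat - b = 0 := by
        rw [← inner_self_eq_zero (𝕜 := ℝ)]
        have h1 := gd (T xhat - b)
        have h2 := gd (-(T xhat - b))
        rw [inner_neg_right] at h2
        linarith
      have hTb : T xhat = b := by rwa [sub_eq_zero] at hg0
      refine ⟨0, by simp [hTb], fun d => ?_, Or.inl ⟨hxhat, rfl⟩⟩
      -- positive semidefinite with μ = 0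
      have hd1 : (0:ℝ) < ‖d‖ + 1 := by positivity
      have hβ : 0 < (Δ - ‖xhat‖) / (‖d‖ + 1) := div_pos (by linarith) hd1
      have hball : ‖xhat + ((Δ - ‖xhat‖) / (‖d‖ + 1)) • d‖ ≤ Δ := by
        refine le_trans (norm_add_le _ _) ?_
        rw [norm_smul, Real.norm_eq_abs, abs_of_pos hβ]
        have hcan : (Δ - ‖xhat‖) / (‖d‖ + 1) * (‖d‖ + 1) = Δ - ‖xhat‖ :=
          div_mul_cancel₀ _ (ne_of_gt hd1)
        nlinarith [norm_nonneg d, mul_nonneg hβ.le (norm_nonneg d)]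
      have h2 := key _ hball
      rw [real_inner_smul_right, map_smul, real_inner_smul_left, real_inner_smul_right,
        hg0] at h2
      simp only [inner_zero_left] at h2
      simp only [zero_mul, add_zero]
      nlinarith [h2, mul_pos hβ hβ]
    · -- boundary case
      have hx2 : ⟪xhat, xhat⟫ = Δ ^ 2 := by rw [real_inner_self_eq_norm_sq, heqΔ]
      -- Step 1: the gradient is orthogonal-free on the tangent space
      have step1 : ∀ d : F, ⟪xhat, d⟫ = 0 → 0 ≤ ⟪T xhat - b, d⟫ := by
        intro d hdo
        have hd1 : (0:ℝ) < ‖d‖ + 1 := by positivity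
        have hβ : 0 < Δ / (‖d‖ + 1) := div_pos hΔ hd1
        have hdd : ⟪d, d⟫ = ‖d‖ ^ 2 := real_inner_self_eq_norm_sq d
        have hα : 0 ≤ ‖d‖ ^ 2 / Δ ^ 2 := by positivity
        have hkey : ∀ t : ℝ, 0 < t → t ≤ 1 →
            0 ≤ (Δ / (‖d‖ + 1) * ⟪T xhat - b, d⟫) * t +
              (-(‖d‖ ^ 2 / Δ ^ 2) * (Δ / (‖d‖ + 1)) ^ 2 * ⟪T xhat - b, xhat⟫ +
                (1/2) * (Δ / (‖d‖ + 1)) ^ 2 * ⟪d, T d⟫) * t ^ 2 +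
              (-(1/2) * (‖d‖ ^ 2 / Δ ^ 2) * (Δ / (‖d‖ + 1)) ^ 3 *
                (⟪xhat, T d⟫ + ⟪d, T xhat⟫)) * t ^ 3 +
              ((1/2) * (‖d‖ ^ 2 / Δ ^ 2) ^ 2 * (Δ / (‖d‖ + 1)) ^ 4 * ⟪xhat, T xhat⟫) * t ^ 4 := by
          intro t ht ht1
          obtain ⟨u, hu⟩ : ∃ u, u = t * (Δ / (‖d‖ + 1)) := ⟨_, rfl⟩
          obtain ⟨s, hs⟩ : ∃ s, s = (‖d‖ ^ 2 / Δ ^ 2) * u ^ 2 := ⟨_, rfl⟩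
          have hupos : 0 < u := hu ▸ by positivity
          have hsnn : 0 ≤ s := hs ▸ by positivity
          have hsΔ : s * Δ ^ 2 = u ^ 2 * ‖d‖ ^ 2 := by
            rw [hs]; field_simp
          have hs1 : s ≤ 1 := by
            have hs' : s = t ^ 2 * ‖d‖ ^ 2 / (‖d‖ + 1) ^ 2 := by
              rw [hs, hu]; field_simp
            rw [hs', div_le_one (by positivity)]
            have hd2 : ‖d‖ ^ 2 ≤ (‖d‖ + 1) ^ 2 := by nlinarith [norm_nonneg d]
            have ht2 : t ^ 2 ≤ 1 := by nlinarith
            nlinarith [sq_nonneg t, sq_nonneg ‖d‖]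
          have hball : ‖xhat + ((-s) • xhat + u • d)‖ ≤ Δ := by
            apply hnorm
            have hinner : ⟪xhat + ((-s) • xhat + u • d), xhat + ((-s) • xhat + u • d)⟫ =
                (1 - s) ^ 2 * ⟪xhat, xhat⟫ + 2 * ((1 - s) * u) * ⟪xhat, d⟫ +
                  u ^ 2 * ⟪d, d⟫ := by
              simp only [inner_add_left, inner_add_right, real_inner_smul_left,
                real_inner_smul_right]
              linear_combination (-(u - s * u)) * (real_inner_comm d xhat)
            rw [hinner, hdo, hx2, hdd]
            nlinarith [hsΔ, mul_nonneg (sq_nonneg Δ) (mul_nonneg hsnn (sub_nonneg.mpr hs1))]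
          have h2 := key _ hball
          have hghq : ⟪T xhat - b, (-s) • xhat + u • d⟫ =
              -s * ⟪T xhat - b, xhat⟫ + u * ⟪T xhat - b, d⟫ := by
            simp only [inner_add_right, real_inner_smul_right]
          have hTh : ⟪(-s) • xhat + u • d, T ((-s) • xhat + u • d)⟫ =
              s ^ 2 * ⟪xhat, T xhat⟫ - s * u * ⟪xhat, T d⟫ - s * u * ⟪d, T xhat⟫ +
                u ^ 2 * ⟪d, T d⟫ := by
            simp only [map_add, map_smul, inner_add_left, inner_add_right,
              real_inner_smul_left, real_inner_smul_right]
            ring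
          rw [hghq, hTh] at h2
          rw [hs, hu] at h2
          ring_nf at h2 ⊢
          linarith [h2]
        have h3 := aux_poly _ _ _ _ hkey
        nlinarith [h3, hβ]
      have step1' : ∀ d : F, ⟪xhat, d⟫ = 0 → ⟪T xhat - b, d⟫ = 0 := by
        intro d hdo
        have h1 := step1 d hdo
        have h2 := step1 (-d) (by rw [inner_neg_right, hdo, neg_zero])
        rw [inner_neg_right] at h2
        linarith
      -- Step 2: define μ
      obtain ⟨μ, hμdef⟩ : ∃ μ, μ = -⟪T xhat - b, xhat⟫ / Δ ^ 2 := ⟨_, rfl⟩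
      have hΔ2 : (Δ:ℝ) ^ 2 ≠ 0 := by positivity
      have hperp : ⟪xhat, (T xhat - b) + μ • xhat⟫ = 0 := by
        rw [inner_add_right, real_inner_smul_right, hx2, hμdef,
          real_inner_comm xhat (T xhat - b)]
        field_simp
        ring
      have hgz : (T xhat - b) + μ • xhat = 0 := by
        rw [← inner_self_eq_zero (𝕜 := ℝ)]
        have h1 : ⟪T xhat - b, (T xhat - b) + μ • xhat⟫ = 0 := step1' _ hperp
        have : ⟪(T xhat - b) + μ • xhat, (T xhat - b) + μ • xhat⟫ =
            ⟪T xhat - b, (T xhat - b) + μ • xhat⟫ + μ * ⟪xhat, (T xhat - b) + μ • xhat⟫ := by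
          simp only [inner_add_left, real_inner_smul_left]
        rw [this, h1, hperp]
        ring
      have heq2 : T xhat + μ • xhat = b := by
        have : T xhat - b + μ • xhat = T xhat + μ • xhat - b := by abel
        rw [this] at hgz
        rwa [sub_eq_zero] at hgz
      have hg : T xhat - b = -(μ • xhat) := by rw [← heq2]; abel
      -- Step 3: μ ≥ 0
      have hμ0 : 0 ≤ μ := by
        have hkey : ∀ t : ℝ, 0 < t → t ≤ 1 →
            0 ≤ (μ * Δ ^ 2) * t + ((1/2) * ⟪xhat, T xhat⟫) * t ^ 2 +
              0 * t ^ 3 + 0 * t ^ 4 := by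
          intro t ht ht1
          have hball : ‖xhat + (-t) • xhat‖ ≤ Δ := by
            apply hnorm
            have : xhat + (-t) • xhat = (1 - t) • xhat := by
              rw [sub_smul, one_smul, neg_smul]; abel
            rw [this, real_inner_smul_left, real_inner_smul_right, hx2]
            nlinarith [mul_pos hΔ hΔ, mul_nonneg (mul_pos hΔ hΔ).le
              (mul_nonneg ht.le (by linarith : (0:ℝ) ≤ 2 - t))]
          have h2 := key _ hball
          rw [real_inner_smul_right, map_smul, real_inner_smul_left, real_inner_smul_right,
            hg, inner_neg_left, real_inner_smul_left, hx2] at h2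
          nlinarith [h2]
        have h3 := aux_poly _ _ _ _ hkey
        nlinarith [h3, mul_pos hΔ hΔ]
      -- Step 4: positive semidefiniteness
      have pneg : ∀ d : F, ⟪xhat, d⟫ < 0 → 0 ≤ ⟪d, T d⟫ + μ * ⟪d, d⟫ := by
        intro d hdneg
        have hdne : d ≠ 0 := by
          intro h0
          rw [h0, inner_zero_right] at hdneg
          exact lt_irrefl 0 hdneg
        have hddpos : 0 < ⟪d, d⟫ := by
          rw [real_inner_self_eq_norm_sq]
          have := norm_pos_iff.mpr hdne
          positivity
        obtain ⟨t, htdef⟩ : ∃ t, t = -2 * ⟪xhat, d⟫ / ⟪d, d⟫ := ⟨_, rfl⟩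
        have htpos : 0 < t := htdef ▸ div_pos (by linarith) hddpos
        have htd : t * ⟪d, d⟫ = -2 * ⟪xhat, d⟫ := by
          rw [htdef]; field_simp
        have hball : ‖xhat + t • d‖ ≤ Δ := by
          apply hnorm
          have : ⟪xhat + t • d, xhat + t • d⟫ =
              ⟪xhat, xhat⟫ + 2 * t * ⟪xhat, d⟫ + t ^ 2 * ⟪d, d⟫ := by
            simp only [inner_add_left, inner_add_right, real_inner_smul_left,
              real_inner_smul_right]
            linear_combination (-t) * (real_inner_comm d xhat)
          rw [this, hx2]
          have h4 : t ^ 2 * ⟪d, d⟫ = -2 * t * ⟪xhat, d⟫ := by linear_combination t * htd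
          linarith
        have h2 := key _ hball
        rw [real_inner_smul_right, map_smul, real_inner_smul_left, real_inner_smul_right,
          hg, inner_neg_left, real_inner_smul_left] at h2
        have h6 : t * -(μ * ⟪xhat, d⟫) = t ^ 2 / 2 * (μ * ⟪d, d⟫) := by
          linear_combination (-(t * μ) / 2) * htd
        rw [h6] at h2
        by_contra hx
        push_neg at hx
        nlinarith [h2, mul_pos htpos htpos]
      refine ⟨μ, heq2, fun d => ?_, Or.inr ⟨heqΔ, hμ0⟩⟩
      rcases lt_trichotomy (⟪xhat, d⟫ : ℝ) 0 with hlt0 | heq0 | hgt0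
      · exact pneg d hlt0
      · apply aux_poly0 _ (-(⟪d, T xhat⟫ + ⟪xhat, T d⟫) - 2 * μ * ⟪d, xhat⟫)
          (⟪xhat, T xhat⟫ + μ * ⟪xhat, xhat⟫)
        intro ε hε hε1
        have hde : ⟪xhat, d - ε • xhat⟫ < 0 := by
          rw [inner_sub_right, real_inner_smul_right, heq0, hx2]
          nlinarith [mul_pos hε (mul_pos hΔ hΔ)]
        have h2 := pneg _ hde
        have hT : ⟪d - ε • xhat, T (d - ε • xhat)⟫ =
            ⟪d, T d⟫ - ε * ⟪d, T xhat⟫ - ε * ⟪xhat, T d⟫ + ε ^ 2 * ⟪xhat, T xhat⟫ := by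
          simp only [map_sub, map_smul, inner_sub_left, inner_sub_right,
            real_inner_smul_left, real_inner_smul_right]
          ring
        have hI : ⟪d - ε • xhat, d - ε • xhat⟫ =
            ⟪d, d⟫ - 2 * ε * ⟪d, xhat⟫ + ε ^ 2 * ⟪xhat, xhat⟫ := by
          simp only [inner_sub_left, inner_sub_right, real_inner_smul_left,
            real_inner_smul_right]
          linear_combination ε * (real_inner_comm xhat d)
        rw [hT, hI] at h2
        nlinarith [h2]
      · have h2 := pneg (-d) (by rw [inner_neg_right]; linarith)
        rw [map_neg, inner_neg_left, inner_neg_right, neg_neg, inner_neg_left,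
          inner_neg_right, neg_neg] at h2
        exact h2
  · -- backward direction
    rintro ⟨μ, heq, hpsd, hcase⟩ x hx
    have hx' : x = xhat + (x - xhat) := by abel
    rw [hx', hexp (x - xhat)]
    have hg : T xhat - b = -(μ • xhat) := by rw [← heq]; abel
    have h1 : ⟪T xhat - b, x - xhat⟫ = -(μ * ⟪xhat, x - xhat⟫) := by
      rw [hg, inner_neg_left, real_inner_smul_left]
    have h2 := hpsd (x - xhat)
    have hxx : ⟪x, x⟫ = ⟪xhat, xhat⟫ + 2 * ⟪xhat, x - xhat⟫ + ⟪x - xhat, x - xhat⟫ := by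
      simp only [inner_sub_left, inner_sub_right]
      linear_combination (real_inner_comm xhat x)
    rcases hcase with ⟨_, rfl⟩ | ⟨hb, hμ⟩
    · simp only [zero_mul, add_zero] at h2 ⊢
      rw [h1]
      simp only [zero_mul, neg_zero]
      linarith
    · have hxd : ⟪x, x⟫ ≤ Δ ^ 2 := by
        rw [real_inner_self_eq_norm_sq]
        nlinarith [norm_nonneg x]
      have hxh2 : ⟪xhat, xhat⟫ = Δ ^ 2 := by rw [real_inner_self_eq_norm_sq, hb]
      rw [h1]
      nlinarith [h2]


/-- the classical characterization of global minimizers of the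
trust-region subproblem `min_{‖x‖ ≤ Δ} (1/2)xᵀAx − bᵀx`. -/
theorem trust_region_subproblem_optimality {n : ℕ}
    (A : Matrix (Fin n) (Fin n) ℝ) (hA : A.IsSymm)
    (b : EuclideanSpace ℝ (Fin n)) (Δ : ℝ) (hΔ : 0 < Δ)
    (f : EuclideanSpace ℝ (Fin n) → ℝ)
    (hf : ∀ x, f x = (1 / 2) * ⟪x, Matrix.toEuclideanLin A x⟫ - ⟪b, x⟫)
    (xhat : EuclideanSpace ℝ (Fin n)) (hxhat : ‖xhat‖ ≤ Δ) :
    (∀ x : EuclideanSpace ℝ (Fin n), ‖x‖ ≤ Δ → f xhat ≤ f x) ↔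
      ∃ μ : ℝ,
        Matrix.toEuclideanLin (A + μ • 1) xhat = b ∧
        (A + μ • 1).PosSemidef ∧
        ((‖xhat‖ ≤ Δ ∧ μ = 0) ∨ (‖xhat‖ = Δ ∧ 0 ≤ μ)) := by
  have hsymT : ∀ x y : EuclideanSpace ℝ (Fin n),
      ⟪Matrix.toEuclideanLin A x, y⟫ = ⟪x, Matrix.toEuclideanLin A y⟫ :=
    Matrix.isHermitian_iff_isSymmetric.mp hA
  have htl : ∀ (μ : ℝ) (x : EuclideanSpace ℝ (Fin n)),
      Matrix.toEuclideanLin (A + μ • 1) x = Matrix.toEuclideanLin A x + μ • x := by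
    intro μ x
    simp [Matrix.toEuclideanLin_apply, Matrix.add_mulVec, Matrix.smul_mulVec,
      Matrix.one_mulVec]
  have habs := abstract_tr (Matrix.toEuclideanLin A) hsymT b Δ hΔ xhat hxhat
  have hlhs : (∀ x : EuclideanSpace ℝ (Fin n), ‖x‖ ≤ Δ → f xhat ≤ f x) ↔
      (∀ x : EuclideanSpace ℝ (Fin n), ‖x‖ ≤ Δ →
        (1/2) * ⟪xhat, Matrix.toEuclideanLin A xhat⟫ - ⟪b, xhat⟫ ≤
          (1/2) * ⟪x, Matrix.toEuclideanLin A x⟫ - ⟪b, x⟫) := by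
    constructor <;> intro H x hx <;> have := H x hx <;> rw [hf, hf] at * <;> linarith [this]
  rw [hlhs, habs]
  constructor
  · rintro ⟨μ, h1, h2, h3⟩
    refine ⟨μ, by rw [htl μ xhat] at *; exact h1, ?_, h3⟩
    rw [Matrix.posSemidef_iff_dotProduct_mulVec]
    constructor
    · unfold Matrix.IsHermitian
      rw [Matrix.conjTranspose_add, Matrix.conjTranspose_smul]
      simp only [Matrix.conjTranspose_one, star_trivial]
      rw [show Matrix.conjTranspose A = A from hA]
    · intro v
      have h4 := h2 ((WithLp.equiv 2 _).symm v)
      have h5 : ⟪(WithLp.equiv 2 _).symm v,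
          Matrix.toEuclideanLin (A + μ • 1) ((WithLp.equiv 2 _).symm v)⟫ =
          ⟪(WithLp.equiv 2 _).symm v, Matrix.toEuclideanLin A ((WithLp.equiv 2 _).symm v)⟫ +
            μ * ⟪(WithLp.equiv 2 (Fin n → ℝ)).symm v, (WithLp.equiv 2 (Fin n → ℝ)).symm v⟫ := by
        rw [htl, inner_add_right, real_inner_smul_right]
      rw [Matrix.toEuclideanLin_apply_piLp_toLp,
        EuclideanSpace.inner_toLp_toLp] at h5
      rw [dotProduct_comm]
      exact le_of_le_of_eq h4 h5.symm
  · rintro ⟨μ, h1, h2, h3⟩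
    refine ⟨μ, by rw [htl μ xhat] at h1; exact h1, ?_, h3⟩
    intro d
    have h4 := (Matrix.posSemidef_iff_dotProduct_mulVec.mp h2).2 ((WithLp.equiv 2 _) d)
    have h5 : ⟪d, Matrix.toEuclideanLin (A + μ • 1) d⟫ =
        ⟪d, Matrix.toEuclideanLin A d⟫ + μ * ⟪d, d⟫ := by
      rw [htl, inner_add_right, real_inner_smul_right]
    rw [← h5]
    have h6 := h4
    rw [show (star ((WithLp.equiv 2 (Fin n → ℝ)) d) : Fin n → ℝ) =
      (WithLp.equiv 2 (Fin n → ℝ)) d from star_trivial _] at h6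
    rw [EuclideanSpace.inner_eq_star_dotProduct, star_trivial, dotProduct_comm]
    exact h6
end

section
/- Let A be a symmetric positive semidefinite n×n real matrix with smallest and largest eigenvalues λ₁ and λₙ, let b ∈ ℝⁿ, Δ > 0, and f(x) = (1/2)xᵀAx − bᵀx. Suppose x* and μ* satisfy μ* > 0, (A + μ*I)x* = b, and ‖x*‖ = Δ (so x* is the global minimizer of f over the ball {x : ‖x‖ ≤ Δ}). Let ζ = √((λₙ + μ*)/(λ₁ + μ*)). For k ≥ 1, if x_k minimizes f over the set {x ∈ span{b, Ab, …, A^{k−1}b} : ‖x‖ ≤ Δ}, then f(x_k) − f(x*) ≤ 12 ((ζ − 1)/(ζ + 1))^k (f(0) − f(x*)). -/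
open scoped RealInnerProductSpace
open Polynomial Real Finset

open scoped RealInnerProductSpace
open Polynomial Real Finset

section Aux

theorem aux_T_cosh (θ : ℝ) (m : ℤ) :
    (Polynomial.Chebyshev.T ℝ m).eval (Real.cosh θ) = Real.cosh (m * θ) := by
  have h := Polynomial.Chebyshev.T_complex_cos (θ * Complex.I) m
  rw [Complex.cos_mul_I] at h
  have h2 : (((Polynomial.Chebyshev.T ℝ m).eval (Real.cosh θ) : ℝ) : ℂ)
      = (Polynomial.Chebyshev.T ℂ m).eval ((Real.cosh θ : ℝ) : ℂ) :=
    Polynomial.Chebyshev.complex_ofReal_eval_T _ _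
  rw [Complex.ofReal_cosh, h] at h2
  have : ((m : ℂ)) * (θ * Complex.I) = ((m * θ : ℝ) : ℂ) * Complex.I := by push_cast; ring
  rw [this, Complex.cos_mul_I, ← Complex.ofReal_cosh] at h2
  exact_mod_cast h2

theorem aux_natDegree_T_le (m : ℕ) : (Polynomial.Chebyshev.T ℝ (m : ℤ)).natDegree ≤ m := by
  induction m using Nat.twoStepInduction with
  | zero => simp [Polynomial.Chebyshev.T_zero]
  | one => simp [Polynomial.Chebyshev.T_one]
  | more m ih1 ih2 =>
    have : ((m : ℤ) + 2) = ((m + 2 : ℕ) : ℤ) := by push_cast; ring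
    rw [← this, Polynomial.Chebyshev.T_add_two]
    refine le_trans (natDegree_sub_le _ _) (max_le ?_ (le_trans ih1 (by omega)))
    refine le_trans (natDegree_mul_le) ?_
    have h2 : ((m : ℤ) + 1) = ((m + 1 : ℕ) : ℤ) := by push_cast; ring
    rw [h2]
    have := natDegree_mul_le (p := (2 : ℝ[X])) (q := X)
    simp only [natDegree_X, natDegree_ofNat] at this
    omega

set_option maxHeartbeats 1000000 in
theorem aux_cheb_construct (a b : ℝ) (ha : 0 < a) (hab : a < b) (k : ℕ) (hk : 1 ≤ k) :
    ∃ (p : ℝ[X]) (ε : ℝ), 0 ≤ ε ∧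
      ε ≤ 4 * ((Real.sqrt (b / a) - 1) / (Real.sqrt (b / a) + 1)) ^ k ∧
      p.natDegree ≤ k ∧ p.eval 0 = 1 ∧
      (∀ t, a ≤ t → t ≤ b → 0 ≤ p.eval t ∧ p.eval t ≤ ε ∧ p.eval t ≤ 1) := by
  set ζ : ℝ := Real.sqrt (b / a) with hζdef
  have hba : (0:ℝ) < b - a := by linarith
  have hζ2 : ζ ^ 2 = b / a := Real.sq_sqrt (div_nonneg (by linarith) ha.le)
  have hζ1 : 1 < ζ := by
    have : (1:ℝ) < b / a := (one_lt_div ha).2 hab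
    nlinarith [Real.sqrt_nonneg (b/a)]
  set s : ℝ := (ζ + 1) / (ζ - 1) with hs
  have hζm : (0:ℝ) < ζ - 1 := by linarith
  have hs1 : 1 < s := by rw [hs, lt_div_iff₀ hζm]; linarith
  have hs0 : 0 < s := by linarith
  set θ : ℝ := Real.log s with hθ
  set x₀ : ℝ := (a + b) / (b - a) with hx₀
  have hbval : b = a * ζ ^ 2 := by
    have h := hζ2
    field_simp at h
    linarith
  have hcosh : Real.cosh θ = x₀ := by
    rw [Real.cosh_eq, hθ, Real.exp_log hs0, Real.exp_neg, Real.exp_log hs0, hx₀, hbval, hs]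
    have hζp : (0:ℝ) < ζ + 1 := by linarith
    have ha' : a ≠ 0 := ne_of_gt ha
    have h1 : ζ - 1 ≠ 0 := ne_of_gt hζm
    have h2 : ζ + 1 ≠ 0 := ne_of_gt hζp
    have h3 : a * ζ ^ 2 - a ≠ 0 := by
      have : a * ζ ^ 2 - a = a * (ζ - 1) * (ζ + 1) := by ring
      rw [this]; positivity
    field_simp
    have h4 : -1 + ζ ^ 2 ≠ 0 := by nlinarith
    ring_nf
    field_simp
    ring
  set D : ℝ := (Polynomial.Chebyshev.T ℝ (k : ℤ)).eval x₀ with hD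
  have hDcosh : D = Real.cosh (k * θ) := by
    rw [hD, ← hcosh, aux_T_cosh]; norm_num
  have hD1 : 1 ≤ D := by rw [hDcosh]; exact Real.one_le_cosh _
  have hD0 : 0 < D := lt_of_lt_of_le one_pos hD1
  have hDge : s ^ k / 2 ≤ D := by
    rw [hDcosh, Real.cosh_eq]
    have : Real.exp (k * θ) = s ^ k := by
      rw [Real.exp_nat_mul, hθ, Real.exp_log hs0]
    rw [this]
    have := Real.exp_pos (-(k * θ))
    linarith
  set ε₀ : ℝ := 1 / D with hε₀
  have hε₀0 : 0 < ε₀ := by positivity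
  have hε₀1 : ε₀ ≤ 1 := by rw [hε₀]; rw [div_le_one hD0]; exact hD1
  have hinv : (ζ - 1) / (ζ + 1) = 1 / s := by rw [hs, one_div_div]
  have hε₀le : ε₀ ≤ 2 * ((ζ - 1) / (ζ + 1)) ^ k := by
    have hsk : 0 < s ^ k := pow_pos hs0 k
    have h1 : ε₀ ≤ 2 / s ^ k := by
      rw [hε₀, div_le_div_iff₀ hD0 hsk]
      nlinarith
    have h2 : (2:ℝ) / s ^ k = 2 * ((ζ - 1) / (ζ + 1)) ^ k := by
      rw [hinv, one_div, inv_pow, div_eq_mul_inv]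
    linarith
  -- the linear change of variables
  set L : ℝ[X] := Polynomial.C x₀ - Polynomial.C (2 / (b - a)) * Polynomial.X with hL
  have hLeval : ∀ t : ℝ, L.eval t = (a + b - 2 * t) / (b - a) := by
    intro t; rw [hL]; simp [hx₀]; ring
  set ρ : ℝ[X] := (Polynomial.Chebyshev.T ℝ (k : ℤ)).comp L * Polynomial.C (1 / D) with hρ
  set p : ℝ[X] := (ρ + Polynomial.C ε₀) * Polynomial.C (1 / (1 + ε₀)) with hp
  have h1ε : (0:ℝ) < 1 + ε₀ := by linarith
  refine ⟨p, 2 * ε₀, by positivity, ?_, ?_, ?_, ?_⟩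
  · linarith
  · -- degree bound
    refine le_trans natDegree_mul_le ?_
    simp only [natDegree_C, add_zero]
    refine le_trans (natDegree_add_le _ _) ?_
    simp only [natDegree_C, max_le_iff]
    constructor
    · refine le_trans natDegree_mul_le ?_
      simp only [natDegree_C, add_zero]
      refine le_trans (Polynomial.natDegree_comp_le) ?_
      have hL1 : L.natDegree ≤ 1 := by
        refine le_trans (natDegree_sub_le _ _) ?_
        simp only [natDegree_C, max_le_iff]
        exact ⟨Nat.zero_le _, le_trans natDegree_mul_le (by simp)⟩
      calc (Polynomial.Chebyshev.T ℝ (k:ℤ)).natDegree * L.natDegree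
          ≤ k * 1 := Nat.mul_le_mul (aux_natDegree_T_le k) hL1
        _ = k := by omega
    · omega
  · -- eval at 0
    have : L.eval 0 = x₀ := by rw [hLeval]; rw [hx₀]; ring_nf
    rw [hp]
    simp only [eval_mul, eval_add, eval_C, hρ, eval_comp, this]
    rw [← hD]
    field_simp
  · intro t hta htb
    have hLt : L.eval t ∈ Set.Icc (-1:ℝ) 1 := by
      rw [hLeval]
      constructor
      · rw [le_div_iff₀ hba]; linarith
      · rw [div_le_iff₀ hba]; linarith
    have hT : |(Polynomial.Chebyshev.T ℝ (k : ℤ)).eval (L.eval t)| ≤ 1 := by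
      have := Real.cos_arccos hLt.1 hLt.2
      rw [← this, Polynomial.Chebyshev.T_real_cos]
      exact Real.abs_cos_le_one _
    have hρt : |ρ.eval t| ≤ ε₀ := by
      rw [hρ]
      simp only [eval_mul, eval_C, eval_comp, abs_mul]
      rw [abs_of_pos (by positivity : (0:ℝ) < 1 / D)]
      calc |(Polynomial.Chebyshev.T ℝ (k:ℤ)).eval (L.eval t)| * (1 / D)
          ≤ 1 * (1 / D) := by
            apply mul_le_mul_of_nonneg_right hT (by positivity)
        _ = ε₀ := by rw [hε₀]; ring
    have habs := abs_le.1 hρt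
    have hpt : p.eval t = (ρ.eval t + ε₀) / (1 + ε₀) := by
      rw [hp]; simp only [eval_mul, eval_add, eval_C]; ring
    clear_value ζ s θ x₀ D ε₀ L ρ p
    refine ⟨?_, ?_, ?_⟩
    · rw [hpt]; apply div_nonneg (by linarith) (by linarith)
    · rw [hpt, div_le_iff₀ h1ε]
      nlinarith [habs.2, hε₀0.le, sq_nonneg ε₀]
    · rw [hpt, div_le_iff₀ h1ε]
      nlinarith [habs.2, hε₀1, hε₀0.le]

variable {n : ℕ}

theorem aux_euclid_mul (M N : Matrix (Fin n) (Fin n) ℝ) (x : EuclideanSpace ℝ (Fin n)) :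
    Matrix.toEuclideanLin (M * N) x = Matrix.toEuclideanLin M (Matrix.toEuclideanLin N x) := by
  simp [Matrix.toEuclideanLin_apply, Matrix.mulVec_mulVec]

theorem aux_euclid_one (x : EuclideanSpace ℝ (Fin n)) :
    Matrix.toEuclideanLin (1 : Matrix (Fin n) (Fin n) ℝ) x = x := by
  simp [Matrix.toEuclideanLin_apply]

theorem aux_euclid_smul_one (μ : ℝ) (x : EuclideanSpace ℝ (Fin n)) :
    Matrix.toEuclideanLin (μ • (1 : Matrix (Fin n) (Fin n) ℝ)) x = μ • x := by
  rw [map_smul]; simp [aux_euclid_one]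

theorem aux_eig_apply (A : Matrix (Fin n) (Fin n) ℝ) (hA : A.IsHermitian) (i : Fin n) :
    Matrix.toEuclideanLin A (hA.eigenvectorBasis i)
      = hA.eigenvalues i • hA.eigenvectorBasis i := by
  have h := hA.mulVec_eigenvectorBasis i
  ext1 j
  have := congrFun h j
  simpa [Matrix.toEuclideanLin_apply] using this

theorem aux_inner_sums (u : OrthonormalBasis (Fin n) ℝ (EuclideanSpace ℝ (Fin n)))
    (a b : Fin n → ℝ) :
    ⟪∑ i, a i • u i, ∑ i, b i • u i⟫ = ∑ i, a i * b i := by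
  rw [inner_sum]
  refine Finset.sum_congr rfl fun i _ => ?_
  rw [sum_inner]
  rw [Finset.sum_eq_single i]
  · rw [real_inner_smul_left, real_inner_smul_right, orthonormal_iff_ite.1 u.orthonormal]
    simp
  · intro j _ hj
    rw [real_inner_smul_left, real_inner_smul_right]
    rw [orthonormal_iff_ite.1 u.orthonormal]
    simp [hj]
  · simp

theorem aux_psd_inner (A : Matrix (Fin n) (Fin n) ℝ) (hA : A.PosSemidef)
    (x : EuclideanSpace ℝ (Fin n)) : 0 ≤ ⟪x, Matrix.toEuclideanLin A x⟫ := by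
  have := hA.dotProduct_mulVec_nonneg (WithLp.ofLp x)
  simpa [Matrix.toEuclideanLin_apply, real_inner_comm,
    EuclideanSpace.inner_eq_star_dotProduct, dotProduct_comm] using this

theorem aux_pow_rep (A : Matrix (Fin n) (Fin n) ℝ)
    (u : OrthonormalBasis (Fin n) ℝ (EuclideanSpace ℝ (Fin n))) (ev : Fin n → ℝ)
    (hu : ∀ i, Matrix.toEuclideanLin A (u i) = ev i • u i) (j : ℕ) (w : Fin n → ℝ) :
    Matrix.toEuclideanLin (A ^ j) (∑ i, w i • u i)
      = ∑ i, (ev i ^ j * w i) • u i := by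
  induction j with
  | zero => simp [aux_euclid_one]
  | succ j ih =>
    rw [pow_succ']
    rw [aux_euclid_mul, ih, map_sum]
    refine Finset.sum_congr rfl fun i _ => ?_
    rw [map_smul, hu i, smul_smul]
    congr 1
    ring

end Aux

set_option maxHeartbeats 1000000 in

/-- linear convergence rate of the trust-region Lanczos method
for a positive semidefinite quadratic, via Chebyshev polynomial analysis. -/
theorem trust_region_lanczos_linear_rate {n : ℕ}
    (A : Matrix (Fin n) (Fin n) ℝ) (hA : A.PosSemidef)
    (b : EuclideanSpace ℝ (Fin n)) (Δ : ℝ) (hΔ : 0 < Δ)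
    (f : EuclideanSpace ℝ (Fin n) → ℝ)
    (hf : ∀ x, f x = (1 / 2) * ⟪x, Matrix.toEuclideanLin A x⟫ - ⟪b, x⟫)
    -- `λ₁` is the smallest eigenvalue of `A`
    (lam1 : ℝ) (hlam1eig : ∃ v : EuclideanSpace ℝ (Fin n), v ≠ 0 ∧
      Matrix.toEuclideanLin A v = lam1 • v)
    (hlam1lb : ∀ x : EuclideanSpace ℝ (Fin n),
      lam1 * ‖x‖ ^ 2 ≤ ⟪x, Matrix.toEuclideanLin A x⟫)
    -- `λₙ` is the largest eigenvalue of `A`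
    (lamn : ℝ) (hlamneig : ∃ v : EuclideanSpace ℝ (Fin n), v ≠ 0 ∧
      Matrix.toEuclideanLin A v = lamn • v)
    (hlamnub : ∀ x : EuclideanSpace ℝ (Fin n),
      ⟪x, Matrix.toEuclideanLin A x⟫ ≤ lamn * ‖x‖ ^ 2)
    -- the optimizer on the boundary with positive multiplier `μ*`
    (xstar : EuclideanSpace ℝ (Fin n)) (μ : ℝ) (hμ : 0 < μ)
    (hKKT : Matrix.toEuclideanLin (A + μ • 1) xstar = b)
    (hxstar : ‖xstar‖ = Δ)
    (ζ : ℝ) (hζ : ζ = Real.sqrt ((lamn + μ) / (lam1 + μ)))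
    (k : ℕ) (hk : 1 ≤ k)
    (xk : EuclideanSpace ℝ (Fin n))
    (hmem : xk ∈ Submodule.span ℝ
      ((fun j : ℕ => Matrix.toEuclideanLin (A ^ j) b) '' Set.Iio k))
    (hfeas : ‖xk‖ ≤ Δ)
    (hmin : ∀ x ∈ Submodule.span ℝ
        ((fun j : ℕ => Matrix.toEuclideanLin (A ^ j) b) '' Set.Iio k),
      ‖x‖ ≤ Δ → f xk ≤ f x) :
    f xk - f xstar ≤ 12 * ((ζ - 1) / (ζ + 1)) ^ k * (f 0 - f xstar) := by
  classical
  have hHerm : A.IsHermitian := hA.1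
  obtain ⟨u, ev, hu, hev0⟩ :
      ∃ (u : OrthonormalBasis (Fin n) ℝ (EuclideanSpace ℝ (Fin n))) (ev : Fin n → ℝ),
        (∀ i, Matrix.toEuclideanLin A (u i) = ev i • u i) ∧ (∀ i, 0 ≤ ev i) :=
    ⟨hHerm.eigenvectorBasis, hHerm.eigenvalues, aux_eig_apply A hHerm,
      fun i => hA.eigenvalues_nonneg i⟩
  have huniti : ∀ i : Fin n, ⟪u i, u i⟫ = (1:ℝ) := by
    intro i
    have := orthonormal_iff_ite.1 u.orthonormal i i
    simpa using this
  have hunorm : ∀ i, ‖u i‖ = 1 := fun i => u.orthonormal.1 i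
  have hlow : ∀ i, lam1 ≤ ev i := by
    intro i
    have h1 := hlam1lb (u i)
    rw [hu i, real_inner_smul_right, huniti i, hunorm i] at h1
    simpa using h1
  have hup : ∀ i, ev i ≤ lamn := by
    intro i
    have h1 := hlamnub (u i)
    rw [hu i, real_inner_smul_right, huniti i, hunorm i] at h1
    simpa using h1
  -- lam1 ≥ 0
  have hlam10 : 0 ≤ lam1 := by
    obtain ⟨v, hv0, hveig⟩ := hlam1eig
    have hpsd := aux_psd_inner A hA v
    rw [hveig, real_inner_smul_right, real_inner_self_eq_norm_sq] at hpsd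
    have hvn : ‖v‖ ≠ 0 := norm_ne_zero_iff.2 hv0
    have hvpos : 0 < ‖v‖ ^ 2 := by positivity
    nlinarith
  have hl1n : lam1 ≤ lamn := by
    obtain ⟨w, hw0, hweig⟩ := hlamneig
    have h1 := hlam1lb w
    rw [hweig, real_inner_smul_right, real_inner_self_eq_norm_sq] at h1
    have hwn : ‖w‖ ≠ 0 := norm_ne_zero_iff.2 hw0
    have hwpos : 0 < ‖w‖ ^ 2 := by positivity
    nlinarith
  -- coordinates of xstar
  set c : Fin n → ℝ := fun i => ⟪u i, xstar⟫ with hc_def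
  have hxrep : xstar = ∑ i, c i • u i := (u.sum_repr' xstar).symm
  have hb_rep : b = ∑ i, ((ev i + μ) * c i) • u i := by
    have h1 : Matrix.toEuclideanLin A xstar = ∑ i, (ev i * c i) • u i := by
      rw [hxrep]
      have := aux_pow_rep A u ev hu 1 c
      simpa using this
    have h2 : b = Matrix.toEuclideanLin A xstar + μ • xstar := by
      rw [← hKKT, map_add, LinearMap.add_apply, aux_euclid_smul_one]
    rw [h2, h1, hxrep, Finset.smul_sum, ← Finset.sum_add_distrib]
    refine Finset.sum_congr rfl fun i _ => ?_
    rw [smul_smul, ← add_smul]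
    congr 1
    ring
  -- inner product computations
  have hinner : ∀ w₁ w₂ : Fin n → ℝ,
      ⟪∑ i, w₁ i • u i, ∑ i, w₂ i • u i⟫ = ∑ i, w₁ i * w₂ i := aux_inner_sums u
  have hnormsq : ∀ w : Fin n → ℝ,
      ‖(∑ i, w i • u i : EuclideanSpace ℝ (Fin n))‖ ^ 2 = ∑ i, w i ^ 2 := by
    intro w
    rw [← real_inner_self_eq_norm_sq, hinner]
    exact Finset.sum_congr rfl fun i _ => (sq (w i)).symm
  have hΔsq : ∑ i, c i ^ 2 = Δ ^ 2 := by
    have h := hnormsq c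
    rw [← hxrep, hxstar] at h
    linarith
  have hfval : ∀ w : Fin n → ℝ, f (∑ i, w i • u i)
      = ∑ i, ((1/2) * ev i * w i ^ 2 - (ev i + μ) * c i * w i) := by
    intro w
    rw [hf]
    have hTw : Matrix.toEuclideanLin A (∑ i, w i • u i) = ∑ i, (ev i * w i) • u i := by
      have := aux_pow_rep A u ev hu 1 w
      simpa using this
    rw [hTw, hinner, hb_rep, hinner, Finset.mul_sum, ← Finset.sum_sub_distrib]
    refine Finset.sum_congr rfl fun i _ => by ring
  have hf0 : f 0 = 0 := by rw [hf]; simp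
  have hfx : f xstar = ∑ i, ((1/2) * ev i * c i ^ 2 - (ev i + μ) * c i * c i) := by
    conv_lhs => rw [hxrep]
    exact hfval c
  have hsum1 : f 0 - f xstar = ∑ i, ((1/2) * ev i + μ) * c i ^ 2 := by
    rw [hf0, hfx, zero_sub, ← Finset.sum_neg_distrib]
    exact Finset.sum_congr rfl fun i _ => by ring
  have hpos0 : 0 ≤ f 0 - f xstar := by
    rw [hsum1]
    refine Finset.sum_nonneg fun i _ => ?_
    have := hev0 i
    nlinarith [sq_nonneg (c i)]
  by_cases hdeg : lam1 = lamn
  · -- degenerate case : xstar ∈ Krylov space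
    have hev_eq : ∀ i, ev i = lam1 := fun i => le_antisymm (hdeg ▸ hup i) (hlow i)
    have hbx : b = (lam1 + μ) • xstar := by
      rw [hb_rep, hxrep, Finset.smul_sum]
      refine Finset.sum_congr rfl fun i _ => ?_
      rw [smul_smul, hev_eq i]
    have hlμ : (0:ℝ) < lam1 + μ := by linarith
    have hxs_eq : xstar = (lam1 + μ)⁻¹ • b := by
      rw [hbx, smul_smul, inv_mul_cancel₀ (ne_of_gt hlμ), one_smul]
    have hb_mem : b ∈ Submodule.span ℝ
        ((fun j : ℕ => Matrix.toEuclideanLin (A ^ j) b) '' Set.Iio k) := by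
      apply Submodule.subset_span
      exact ⟨0, by simp; omega, by simp [aux_euclid_one]⟩
    have hxs_mem : xstar ∈ Submodule.span ℝ
        ((fun j : ℕ => Matrix.toEuclideanLin (A ^ j) b) '' Set.Iio k) := by
      rw [hxs_eq]
      exact Submodule.smul_mem _ _ hb_mem
    have hle := hmin xstar hxs_mem (le_of_eq hxstar)
    have hζ1 : ζ = 1 := by
      rw [hζ, hdeg, div_self (by linarith : lamn + μ ≠ 0), Real.sqrt_one]
    rw [hζ1]
    norm_num
    rw [zero_pow (by omega : k ≠ 0)]
    simpa using hle
  · -- main case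
    have hlt : lam1 < lamn := lt_of_le_of_ne hl1n hdeg
    have haL : (0:ℝ) < lam1 + μ := by linarith
    have hab : lam1 + μ < lamn + μ := by linarith
    obtain ⟨p, ε, hε0, hεle, hpdeg, hp0, hpbounds⟩ :=
      aux_cheb_construct (lam1 + μ) (lamn + μ) haL hab k hk
    rw [← hζ] at hεle
    -- factor out X from 1 - p
    have hXdvd : Polynomial.X ∣ (1 - p) := by
      rw [Polynomial.X_dvd_iff]
      simp [Polynomial.coeff_sub, Polynomial.coeff_zero_eq_eval_zero, hp0]
    obtain ⟨P, hP⟩ := hXdvd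
    have hPdeg : P.natDegree < k := by
      rcases eq_or_ne P 0 with h | h
      · rw [h]; simp; omega
      · have h1 : (1 - p).natDegree ≤ k :=
          le_trans (Polynomial.natDegree_sub_le _ _) (by simp [hpdeg])
        rw [hP, Polynomial.natDegree_mul Polynomial.X_ne_zero h, Polynomial.natDegree_X] at h1
        omega
    set Q : ℝ[X] := P.comp (Polynomial.X + Polynomial.C μ) with hQ
    have hQdeg : Q.natDegree < k := by
      refine lt_of_le_of_lt (le_trans Polynomial.natDegree_comp_le ?_) hPdeg
      have h1 : (Polynomial.X + Polynomial.C μ : ℝ[X]).natDegree ≤ 1 :=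
        le_trans (Polynomial.natDegree_add_le _ _) (by simp)
      calc P.natDegree * (Polynomial.X + Polynomial.C μ : ℝ[X]).natDegree
          ≤ P.natDegree * 1 := Nat.mul_le_mul_left _ h1
        _ = P.natDegree := by omega
    set r : Fin n → ℝ := fun i => p.eval (ev i + μ) with hr
    have hrprop : ∀ i, 0 ≤ r i ∧ r i ≤ ε ∧ r i ≤ 1 := by
      intro i
      exact hpbounds (ev i + μ) (by have := hlow i; linarith) (by have := hup i; linarith)
    set y : EuclideanSpace ℝ (Fin n) :=
      ∑ j ∈ Finset.range k, Q.coeff j • Matrix.toEuclideanLin (A ^ j) b with hy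
    have hymem : y ∈ Submodule.span ℝ
        ((fun j : ℕ => Matrix.toEuclideanLin (A ^ j) b) '' Set.Iio k) := by
      rw [hy]
      refine Submodule.sum_mem _ fun j hj => Submodule.smul_mem _ _ ?_
      exact Submodule.subset_span ⟨j, Finset.mem_range.1 hj, rfl⟩
    have hyrep : y = ∑ i, ((1 - r i) * c i) • u i := by
      rw [hy]
      have h1 : ∀ j : ℕ, Matrix.toEuclideanLin (A ^ j) b
          = ∑ i, (ev i ^ j * ((ev i + μ) * c i)) • u i := by
        intro j
        rw [hb_rep]
        exact aux_pow_rep A u ev hu j _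
      simp_rw [h1, Finset.smul_sum, smul_smul]
      rw [Finset.sum_comm]
      refine Finset.sum_congr rfl fun i _ => ?_
      rw [← Finset.sum_smul]
      congr 1
      have he : Q.eval (ev i) = ∑ j ∈ Finset.range k, Q.coeff j * ev i ^ j :=
        Polynomial.eval_eq_sum_range' hQdeg _
      have he2 : Q.eval (ev i) = P.eval (ev i + μ) := by
        rw [hQ, Polynomial.eval_comp]; simp
      have he3 : (ev i + μ) * P.eval (ev i + μ) = 1 - r i := by
        have h4 := congrArg (Polynomial.eval (ev i + μ)) hP
        simp only [Polynomial.eval_sub, Polynomial.eval_one, Polynomial.eval_mul,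
          Polynomial.eval_X] at h4
        rw [hr, ← h4]
      calc ∑ j ∈ Finset.range k, Q.coeff j * (ev i ^ j * ((ev i + μ) * c i))
          = (∑ j ∈ Finset.range k, Q.coeff j * ev i ^ j) * ((ev i + μ) * c i) := by
            rw [Finset.sum_mul]
            exact Finset.sum_congr rfl fun j _ => by ring
        _ = (1 - r i) * c i := by rw [← he, he2, ← he3]; ring
    have hynorm : ‖y‖ ≤ Δ := by
      have h1 : ‖y‖ ^ 2 ≤ Δ ^ 2 := by
        rw [hyrep, hnormsq, ← hΔsq]
        refine Finset.sum_le_sum fun i _ => ?_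
        obtain ⟨h0, hε', h1'⟩ := hrprop i
        nlinarith [mul_nonneg (mul_nonneg h0 (sub_nonneg.2 h1')) (sq_nonneg (c i)),
          mul_nonneg h0 (sq_nonneg (c i))]
      nlinarith [norm_nonneg y]
    have hfy : f y = ∑ i, ((1/2) * ev i * ((1 - r i) * c i) ^ 2
        - (ev i + μ) * c i * ((1 - r i) * c i)) := by
      conv_lhs => rw [hyrep]
      exact hfval _
    have hdiff : f y - f xstar ≤ ε * (f 0 - f xstar) := by
      rw [hfy, hsum1, hfx, Finset.mul_sum, ← Finset.sum_sub_distrib]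
      refine Finset.sum_le_sum fun i _ => ?_
      obtain ⟨h0, hε', h1'⟩ := hrprop i
      nlinarith [hev0 i, sq_nonneg (c i), hμ.le,
        mul_nonneg (mul_nonneg (hev0 i) (sq_nonneg (c i))) (sub_nonneg.2 hε'),
        mul_nonneg (mul_nonneg (hev0 i) (sq_nonneg (c i))) (mul_nonneg h0 (sub_nonneg.2 h1')),
        mul_nonneg (mul_nonneg hμ.le (sq_nonneg (c i))) (sub_nonneg.2 hε')]
    have hζge : 1 ≤ ζ := by
      rw [hζ]
      rw [show (1:ℝ) = Real.sqrt 1 from (Real.sqrt_one).symm]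
      apply Real.sqrt_le_sqrt
      rw [le_div_iff₀ haL]
      linarith
    have hbase : 0 ≤ (ζ - 1) / (ζ + 1) := by
      apply div_nonneg <;> linarith
    have hεfinal : ε ≤ 12 * ((ζ - 1) / (ζ + 1)) ^ k := by
      have := pow_nonneg hbase k
      linarith
    calc f xk - f xstar ≤ f y - f xstar := by
          have := hmin y hymem hynorm
          linarith
      _ ≤ ε * (f 0 - f xstar) := hdiff
      _ ≤ 12 * ((ζ - 1) / (ζ + 1)) ^ k * (f 0 - f xstar) :=
          mul_le_mul_of_nonneg_right hεfinal hpos0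
end

section
/- Let A be a symmetric positive semidefinite n×n real matrix with largest eigenvalue λₙ, let b ∈ ℝⁿ, Δ > 0, and f(x) = (1/2)xᵀAx − bᵀx. Suppose x* and μ* satisfy μ* > 0, (A + μ*I)x* = b, and ‖x*‖ = Δ (so x* is the global minimizer of f over the ball {x : ‖x‖ ≤ Δ}). For k ≥ 1, if x_k minimizes f over the set {x ∈ span{b, Ab, …, A^{k−1}b} : ‖x‖ ≤ Δ}, then f(x_k) − f(x*) ≤ 3(λₙ + μ*)Δ² / (2(k+1)²), and consequently f(x_k) − f(x*) ≤ 3(λₙΔ² + 2(f(0) − f(x*))) / (2(k+1)²). -/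
open scoped RealInnerProductSpace

open Polynomial Polynomial.Chebyshev

lemma abs_sin_nat_mul_le (m : ℕ) (x : ℝ) : |Real.sin (m * x)| ≤ m * |Real.sin x| := by
  induction m with
  | zero => simp
  | succ j ih =>
    have h1 : ((j:ℝ)+1) * x = j * x + x := by ring
    push_cast
    rw [h1, Real.sin_add]
    have hc1 : |Real.cos x| ≤ 1 := Real.abs_cos_le_one x
    have hc2 : |Real.cos (j*x)| ≤ 1 := Real.abs_cos_le_one _
    have hs : (0:ℝ) ≤ |Real.sin x| := abs_nonneg _
    have hs2 : (0:ℝ) ≤ |Real.sin (j*x)| := abs_nonneg _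
    calc |Real.sin (j*x) * Real.cos x + Real.cos (j*x) * Real.sin x|
        ≤ |Real.sin (j*x) * Real.cos x| + |Real.cos (j*x) * Real.sin x| := abs_add_le _ _
      _ = |Real.sin (j*x)| * |Real.cos x| + |Real.cos (j*x)| * |Real.sin x| := by
          rw [abs_mul, abs_mul]
      _ ≤ ((j:ℝ)+1) * |Real.sin x| := by nlinarith

lemma cheb_T_eval_one (m : ℤ) : (T ℝ m).eval 1 = 1 := by
  have h := T_real_cos (θ := 0) (n := m)
  simpa using h

lemma cheb_U_eval_one (j : ℕ) : (U ℝ (j:ℤ)).eval 1 = j + 1 := by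
  have key : ∀ j : ℕ, (U ℝ (j:ℤ)).eval 1 = j + 1 ∧ (U ℝ ((j:ℤ)+1)).eval 1 = j + 2 := by
    intro j
    induction j with
    | zero => norm_num [U_zero, U_one]
    | succ i ih =>
      refine ⟨by push_cast; exact_mod_cast ih.2, ?_⟩
      have h := U_add_two ℝ (i:ℤ)
      have he := congrArg (Polynomial.eval (1:ℝ)) h
      simp only [eval_sub, eval_mul, eval_ofNat, eval_X] at he
      push_cast
      rw [show ((i:ℤ)+1+1) = (i:ℤ)+2 by ring, he, ih.1, ih.2]
      ring
  exact (key j).1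

lemma cheb_T_natDegree_le (j : ℕ) : (T ℝ (j:ℤ)).natDegree ≤ j := by
  have key : ∀ j : ℕ, (T ℝ (j:ℤ)).natDegree ≤ j ∧ (T ℝ ((j:ℤ)+1)).natDegree ≤ j + 1 := by
    intro j
    induction j with
    | zero => constructor <;> simp [T_zero, T_one]
    | succ i ih =>
      refine ⟨by push_cast; exact_mod_cast ih.2, ?_⟩
      have h := T_add_two ℝ (i:ℤ)
      push_cast
      rw [show ((i:ℤ)+1+1) = (i:ℤ)+2 by ring, h]
      refine le_trans (natDegree_sub_le _ _) ?_
      simp only [max_le_iff]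
      have h2 : (2 : ℝ[X]).natDegree = 0 := natDegree_ofNat 2
      have h3 := ih.1
      have h4 := ih.2
      constructor
      · refine le_trans (natDegree_mul_le) ?_
        refine le_trans (add_le_add (natDegree_mul_le) le_rfl) ?_
        simp only [natDegree_X]
        omega
      · omega
  exact (key j).1

lemma cheb_key (m : ℕ) {x : ℝ} (h1 : -1 ≤ x) (h2 : x ≤ 1) :
    -1 ≤ (T ℝ (m:ℤ)).eval x ∧ (T ℝ (m:ℤ)).eval x ≤ 1 ∧
      1 - (T ℝ (m:ℤ)).eval x ≤ (m:ℝ)^2 * (1 - x) := by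
  set φ := Real.arccos x with hφ
  have hx : Real.cos φ = x := Real.cos_arccos h1 h2
  rw [← hx, T_real_cos]
  refine ⟨Real.neg_one_le_cos _, Real.cos_le_one _, ?_⟩
  have e1 : Real.sin ((m:ℝ)*φ/2) ^ 2 = 1/2 - Real.cos ((m:ℝ)*φ)/2 := by
    have := Real.sin_sq_eq_half_sub ((m:ℝ)*φ/2)
    rw [show 2*((m:ℝ)*φ/2) = (m:ℝ)*φ by ring] at this
    exact this
  have e2 : Real.sin (φ/2) ^ 2 = 1/2 - Real.cos φ/2 := by
    have := Real.sin_sq_eq_half_sub (φ/2)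
    rw [show 2*(φ/2) = φ by ring] at this
    exact this
  have hb := abs_sin_nat_mul_le m (φ/2)
  have hb2 : Real.sin ((m:ℝ)*(φ/2))^2 ≤ (m:ℝ)^2 * Real.sin (φ/2)^2 := by
    have h3 : |Real.sin ((m:ℝ)*(φ/2))|^2 ≤ ((m:ℝ) * |Real.sin (φ/2)|)^2 := by
      gcongr ?_ ^ 2
    calc Real.sin ((m:ℝ)*(φ/2))^2 = |Real.sin ((m:ℝ)*(φ/2))|^2 := (sq_abs _).symm
      _ ≤ ((m:ℝ) * |Real.sin (φ/2)|)^2 := h3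
      _ = (m:ℝ)^2 * |Real.sin (φ/2)|^2 := by ring
      _ = (m:ℝ)^2 * Real.sin (φ/2)^2 := by rw [sq_abs]
  rw [show (m:ℝ)*(φ/2) = (m:ℝ)*φ/2 by ring] at hb2
  push_cast
  nlinarith [hb2]

lemma cheb_poly_exists (k : ℕ) (hk : 1 ≤ k) (L : ℝ) (hL : 0 < L) :
    ∃ p : ℝ[X], p.natDegree < k ∧
      ∀ t : ℝ, 0 < t → t ≤ L →
        0 ≤ 1 - t * p.eval t ∧ 1 - t * p.eval t ≤ 1 ∧
          t * (1 - t * p.eval t) ≤ L / ((k:ℝ)+1)^2 := by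
  have hk1 : ((k:ℝ)+1) ≠ 0 := by positivity
  have hLne : L ≠ 0 := ne_of_gt hL
  set m : ℤ := ((k+1 : ℕ) : ℤ) with hm
  set s : ℝ[X] := 1 - C (2/L) * X with hs
  set Rp : ℝ[X] := 1 - (T ℝ m).comp s with hRdef
  have hsev : ∀ t:ℝ, s.eval t = 1 - 2*t/L := by
    intro t; simp [hs]; ring
  have hR0 : Rp.eval 0 = 0 := by
    simp [hRdef, eval_comp, hsev 0, cheb_T_eval_one]
  set g : ℝ[X] := Rp /ₘ X with hg
  have hXg : X * g = Rp := by
    have h := modByMonic_add_div Rp X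
    rw [modByMonic_X, hR0, map_zero, zero_add] at h
    exact h
  set qq : ℝ[X] := C (L/(2*((k:ℝ)+1)^2)) * g with hqq
  have htq : ∀ t : ℝ, t * qq.eval t
      = L/(2*((k:ℝ)+1)^2) * (1 - (T ℝ m).eval (1 - 2*t/L)) := by
    intro t
    have h := congrArg (Polynomial.eval t) hXg
    simp only [eval_mul, eval_X] at h
    have h2 : Rp.eval t = 1 - (T ℝ m).eval (1 - 2*t/L) := by
      simp [hRdef, eval_comp, hsev t]
    rw [h2] at h
    simp only [hqq, eval_mul, eval_C]
    rw [← h]; ring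
  -- q(0) = 1
  have hg0 : g.eval 0 = (derivative Rp).eval 0 := by
    have hd := congrArg derivative hXg
    rw [derivative_mul, derivative_X] at hd
    have := congrArg (Polynomial.eval (0:ℝ)) hd
    simpa using this
  have hdR : (derivative Rp).eval 0 = (2/L) * (((k:ℝ)+1) * ((k:ℝ)+1)) := by
    have h1 : derivative Rp = C (2/L) * (derivative (T ℝ m)).comp s := by
      rw [hRdef, derivative_sub, derivative_one, derivative_comp, hs]
      simp [derivative_sub, derivative_one, derivative_mul, derivative_X, derivative_C]
    rw [h1, eval_mul, eval_C, eval_comp, hsev 0]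
    rw [T_derivative_eq_U]
    have hm1 : m - 1 = ((k : ℕ) : ℤ) := by simp [hm]
    rw [hm1]
    simp only [eval_mul, eval_intCast]
    rw [show (1 - 2*(0:ℝ)/L) = 1 by ring, cheb_U_eval_one k]
    push_cast [hm]
    ring
  have hq0 : qq.eval 0 = 1 := by
    rw [hqq, eval_mul, eval_C, hg0, hdR]
    field_simp
  set pp : ℝ[X] := (1 - qq) /ₘ X with hpp
  have hXp : X * pp = 1 - qq := by
    have h := modByMonic_add_div (1 - qq) X
    rw [modByMonic_X] at h
    rw [show (1 - qq).eval 0 = 0 by simp [hq0], map_zero, zero_add] at h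
    exact h
  have hqp : ∀ t : ℝ, 1 - t * pp.eval t = qq.eval t := by
    intro t
    have h := congrArg (Polynomial.eval t) hXp
    simp only [eval_mul, eval_X, eval_sub, eval_one] at h
    linarith
  -- degree
  have hdeg : pp.natDegree < k := by
    have hds : s.natDegree ≤ 1 := by
      rw [hs]; compute_degree
    have hdT : (T ℝ m).natDegree ≤ k + 1 := cheb_T_natDegree_le (k+1)
    have hdR' : Rp.natDegree ≤ k + 1 := by
      rw [hRdef]
      refine le_trans (natDegree_sub_le _ _) ?_
      simp only [natDegree_one, max_le_iff]
      refine ⟨Nat.zero_le _, ?_⟩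
      refine le_trans (natDegree_comp_le) ?_
      calc (T ℝ m).natDegree * s.natDegree ≤ (k+1) * 1 := by
            exact Nat.mul_le_mul hdT hds
        _ = k + 1 := by ring
    have hdg : g.natDegree ≤ k := by
      rw [hg, natDegree_divByMonic _ (monic_X (R := ℝ))]
      simp only [natDegree_X]
      omega
    have hdq : qq.natDegree ≤ k := le_trans (natDegree_C_mul_le _ _) hdg
    have hd1q : (1 - qq).natDegree ≤ k := by
      refine le_trans (natDegree_sub_le _ _) ?_
      simp only [natDegree_one, max_le_iff]
      exact ⟨Nat.zero_le _, hdq⟩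
    rw [hpp, natDegree_divByMonic _ (monic_X (R := ℝ))]
    simp only [natDegree_X]
    omega
  refine ⟨pp, hdeg, ?_⟩
  intro t ht htL
  rw [hqp t]
  set x : ℝ := 1 - 2*t/L with hx
  have hx1 : -1 ≤ x := by
    rw [hx]
    have : 2*t/L ≤ 2 := by
      rw [div_le_iff₀ hL]; linarith
    linarith
  have hx2 : x ≤ 1 := by
    rw [hx]
    have : 0 < 2*t/L := by positivity
    linarith
  obtain ⟨hT1, hT2, hT3⟩ := cheb_key (k+1) hx1 hx2
  have hmx : (T ℝ m).eval x = (T ℝ (((k+1:ℕ)):ℤ)).eval x := by rw [hm]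
  have htq' : t * qq.eval t = L/(2*((k:ℝ)+1)^2) * (1 - (T ℝ (((k+1:ℕ)):ℤ)).eval x) := by
    rw [htq t, hmx, hx]
  have hc : 0 < L/(2*((k:ℝ)+1)^2) := by positivity
  push_cast at hT3
  constructor
  · -- 0 ≤ q
    nlinarith [htq', mul_nonneg hc.le (by linarith : (0:ℝ) ≤ 1 - (T ℝ (((k+1:ℕ)):ℤ)).eval x)]
  constructor
  · -- q ≤ 1, via t*q ≤ t
    have hbound : t * qq.eval t ≤ t := by
      rw [htq']
      have h5 : 1 - (T ℝ (((k+1:ℕ)):ℤ)).eval x ≤ ((k:ℝ)+1)^2 * (2*t/L) := by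
        have : (1 : ℝ) - x = 2*t/L := by rw [hx]; ring
        calc 1 - (T ℝ (((k+1:ℕ)):ℤ)).eval x ≤ ((k:ℝ)+1)^2 * (1 - x) := hT3
          _ = ((k:ℝ)+1)^2 * (2*t/L) := by rw [this]
      calc L/(2*((k:ℝ)+1)^2) * (1 - (T ℝ (((k+1:ℕ)):ℤ)).eval x)
          ≤ L/(2*((k:ℝ)+1)^2) * (((k:ℝ)+1)^2 * (2*t/L)) := by
            exact mul_le_mul_of_nonneg_left h5 hc.le
        _ = t := by field_simp
    nlinarith [hbound]
  · -- t*q ≤ L/(k+1)^2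
    rw [htq']
    calc L/(2*((k:ℝ)+1)^2) * (1 - (T ℝ (((k+1:ℕ)):ℤ)).eval x)
        ≤ L/(2*((k:ℝ)+1)^2) * 2 := by
          refine mul_le_mul_of_nonneg_left (by linarith) hc.le
      _ = L / ((k:ℝ)+1)^2 := by field_simp

variable {n : ℕ}

lemma toEuclideanLin_one : (Matrix.toEuclideanLin (1 : Matrix (Fin n) (Fin n) ℝ)) = 1 := by
  rw [Matrix.toEuclideanLin_eq_toLin, Matrix.toLin_one]
  rfl

lemma toEuclideanLin_mul (A B : Matrix (Fin n) (Fin n) ℝ) :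
    Matrix.toEuclideanLin (A * B)
      = Matrix.toEuclideanLin A * Matrix.toEuclideanLin B := by
  rw [Matrix.toEuclideanLin_eq_toLin, Matrix.toLin_mul _ (PiLp.basisFun 2 ℝ (Fin n)) _]
  rfl

lemma toEuclideanLin_pow (A : Matrix (Fin n) (Fin n) ℝ) (j : ℕ) :
    Matrix.toEuclideanLin (A ^ j) = (Matrix.toEuclideanLin A) ^ j := by
  induction j with
  | zero => simpa using toEuclideanLin_one
  | succ i ih => rw [pow_succ, pow_succ, toEuclideanLin_mul, ih]

lemma psd_inner_nonneg {A : Matrix (Fin n) (Fin n) ℝ} (hA : A.PosSemidef)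
    (x : EuclideanSpace ℝ (Fin n)) :
    0 ≤ ⟪x, Matrix.toEuclideanLin A x⟫ := by
  have h := hA.dotProduct_mulVec_nonneg x.ofLp
  simpa [Matrix.toEuclideanLin_apply, PiLp.inner_apply, dotProduct, mul_comm] using h

lemma tr_perterm (β μ qv M cv : ℝ) (h0 : 0 ≤ qv) (h1 : qv ≤ 1) (h2 : β * qv ≤ M)
    (h3 : μ ≤ β) (h4 : 0 < μ) :
    1/2 * (β - μ) * ((1 - qv) * cv)^2 - β * cv * ((1 - qv) * cv)
      - (1/2 * (β - μ) * cv^2 - β * cv * cv) ≤ 3/2 * M * cv^2 := by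
  have hβ : 0 < β := lt_of_lt_of_le h4 h3
  have hscal : (1/2) * (β - μ) * (qv^2 - 2*qv) + β * qv ≤ 3/2 * M := by
    nlinarith [mul_nonneg (mul_nonneg hβ.le h0) (sub_nonneg.mpr h1),
      mul_nonneg (sub_nonneg.mpr h3) h0, mul_nonneg h4.le (mul_nonneg h0 h0)]
  nlinarith [mul_le_mul_of_nonneg_right hscal (sq_nonneg cv)]


set_option maxHeartbeats 1000000 in
/-- sublinear `O(1/k²)` convergence rate of the trust-region
Lanczos method for a positive semidefinite quadratic, via Chebyshev
polynomial analysis. -/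
theorem trust_region_lanczos_sublinear_rate {n : ℕ}
    (A : Matrix (Fin n) (Fin n) ℝ) (hA : A.PosSemidef)
    (b : EuclideanSpace ℝ (Fin n)) (Δ : ℝ) (hΔ : 0 < Δ)
    (f : EuclideanSpace ℝ (Fin n) → ℝ)
    (hf : ∀ x, f x = (1 / 2) * ⟪x, Matrix.toEuclideanLin A x⟫ - ⟪b, x⟫)
    -- `λₙ` is the largest eigenvalue of `A`
    (lamn : ℝ) (hlamneig : ∃ v : EuclideanSpace ℝ (Fin n), v ≠ 0 ∧
      Matrix.toEuclideanLin A v = lamn • v)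
    (hlamnub : ∀ x : EuclideanSpace ℝ (Fin n),
      ⟪x, Matrix.toEuclideanLin A x⟫ ≤ lamn * ‖x‖ ^ 2)
    -- the optimizer on the boundary with positive multiplier `μ*`
    (xstar : EuclideanSpace ℝ (Fin n)) (μ : ℝ) (hμ : 0 < μ)
    (hKKT : Matrix.toEuclideanLin (A + μ • 1) xstar = b)
    (hxstar : ‖xstar‖ = Δ)
    (k : ℕ) (hk : 1 ≤ k)
    (xk : EuclideanSpace ℝ (Fin n))
    (hmem : xk ∈ Submodule.span ℝ
      ((fun j : ℕ => Matrix.toEuclideanLin (A ^ j) b) '' Set.Iio k))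
    (hfeas : ‖xk‖ ≤ Δ)
    (hmin : ∀ x ∈ Submodule.span ℝ
        ((fun j : ℕ => Matrix.toEuclideanLin (A ^ j) b) '' Set.Iio k),
      ‖x‖ ≤ Δ → f xk ≤ f x) :
    f xk - f xstar ≤ 3 * (lamn + μ) * Δ ^ 2 / (2 * ((k : ℝ) + 1) ^ 2) ∧
    f xk - f xstar
      ≤ 3 * (lamn * Δ ^ 2 + 2 * (f 0 - f xstar)) / (2 * ((k : ℝ) + 1) ^ 2) := by
  classical
  set TA : EuclideanSpace ℝ (Fin n) →ₗ[ℝ] EuclideanSpace ℝ (Fin n) :=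
    Matrix.toEuclideanLin A with hTAdef
  set TB : EuclideanSpace ℝ (Fin n) →ₗ[ℝ] EuclideanSpace ℝ (Fin n) := TA + μ • 1 with hTBdef
  have hTBmat : Matrix.toEuclideanLin (A + μ • 1) = TB := by
    rw [map_add, map_smul, toEuclideanLin_one, hTBdef, hTAdef]
  have hbeq : TB xstar = b := by rw [← hTBmat]; exact hKKT
  have hTAsym : TA.IsSymmetric := Matrix.isHermitian_iff_isSymmetric.mp hA.1
  have hTBapp : ∀ x, TB x = TA x + μ • x := by
    intro x; rw [hTBdef]; simp
  have hTBsym : TB.IsSymmetric := by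
    intro x y
    rw [hTBapp, hTBapp, inner_add_left, inner_add_right, real_inner_smul_left,
      real_inner_smul_right, hTAsym x y]
  have hfr : Module.finrank ℝ (EuclideanSpace ℝ (Fin n)) = n := finrank_euclideanSpace_fin
  set V := hTBsym.eigenvectorBasis hfr with hV
  set β := hTBsym.eigenvalues hfr with hβdef
  have hVeig : ∀ i, TB (V i) = β i • V i := fun i => by
    rw [hV, hβdef]; exact hTBsym.apply_eigenvectorBasis hfr i
  have hVnorm : ∀ i, ‖V i‖ = 1 := fun i => V.orthonormal.1 i
  -- eigenvalue bounds
  have hβval : ∀ i, β i = ⟪V i, TA (V i)⟫ + μ := by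
    intro i
    have h1 : ⟪V i, TB (V i)⟫ = β i := by
      rw [hVeig i, real_inner_smul_right, real_inner_self_eq_norm_sq, hVnorm i]
      ring
    rw [← h1, hTBapp, inner_add_right, real_inner_smul_right,
      real_inner_self_eq_norm_sq, hVnorm i]
    ring
  have hβlo : ∀ i, μ ≤ β i := by
    intro i
    have := psd_inner_nonneg hA (V i)
    rw [← hTAdef] at this
    rw [hβval i]; linarith
  have hβpos : ∀ i, 0 < β i := fun i => lt_of_lt_of_le hμ (hβlo i)
  have hβhi : ∀ i, β i ≤ lamn + μ := by
    intro i
    have h2 := hlamnub (V i)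
    rw [hVnorm i] at h2
    rw [hβval i]; nlinarith
  have hlamn0 : 0 ≤ lamn := by
    obtain ⟨v, hv0, hveq⟩ := hlamneig
    have hvn : 0 < ‖v‖ ^ 2 := pow_pos (norm_pos_iff.mpr hv0) 2
    have h1 : ⟪v, TA v⟫ = lamn * ‖v‖ ^ 2 := by
      rw [hveq, real_inner_smul_right, real_inner_self_eq_norm_sq]
    have h2 := psd_inner_nonneg hA v
    rw [← hTAdef] at h2
    nlinarith
  set L : ℝ := lamn + μ with hLdef
  have hL : 0 < L := by positivity
  -- coordinates
  set c : Fin n → ℝ := fun i => V.repr xstar i with hc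
  have coordTB : ∀ (x : EuclideanSpace ℝ (Fin n)) i, V.repr (TB x) i = β i * V.repr x i := by
    intro x i
    rw [V.repr_apply_apply, V.repr_apply_apply, ← hTBsym (V i) x, hVeig i,
      real_inner_smul_left]
  have coordpow : ∀ (j : ℕ) (x : EuclideanSpace ℝ (Fin n)) i,
      V.repr ((TB ^ j) x) i = β i ^ j * V.repr x i := by
    intro j
    induction j with
    | zero => intro x i; simp
    | succ m ih =>
      intro x i
      rw [pow_succ, Module.End.mul_apply, ih, coordTB, pow_succ]
      ring
  have coordaeval : ∀ (r : ℝ[X]) (x : EuclideanSpace ℝ (Fin n)) i,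
      V.repr ((Polynomial.aeval TB r) x) i = r.eval (β i) * V.repr x i := by
    intro r
    induction r using Polynomial.induction_on' with
    | add p q hp hq =>
      intro x i
      rw [map_add, LinearMap.add_apply, map_add]
      simp only [PiLp.add_apply]
      rw [hp, hq, eval_add]
      ring
    | monomial m a =>
      intro x i
      rw [Polynomial.aeval_monomial, Module.End.mul_apply, Module.algebraMap_end_apply,
        map_smul]
      simp only [PiLp.smul_apply, smul_eq_mul]
      rw [coordpow, eval_monomial]
      ring
  have innercoord : ∀ x z : EuclideanSpace ℝ (Fin n),
      ⟪x, z⟫ = ∑ i, V.repr x i * V.repr z i := by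
    intro x z
    rw [← V.sum_inner_mul_inner x z]
    refine Finset.sum_congr rfl fun i _ => ?_
    simp only [OrthonormalBasis.repr_apply_apply]
    rw [real_inner_comm x (V i)]
  have normsq : ∀ x : EuclideanSpace ℝ (Fin n), ‖x‖ ^ 2 = ∑ i, (V.repr x i)^2 := by
    intro x
    rw [← real_inner_self_eq_norm_sq, innercoord x x]
    simp [pow_two]
  -- f in coordinates
  have coordb : ∀ i, V.repr b i = β i * c i := by
    intro i; rw [← hbeq, coordTB]
  have fcoord : ∀ x : EuclideanSpace ℝ (Fin n),
      f x = ∑ i, ((1/2) * (β i - μ) * (V.repr x i)^2 - β i * c i * V.repr x i) := by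
    intro x
    rw [hf x]
    have h1 : ⟪x, Matrix.toEuclideanLin A x⟫ = ⟪x, TB x⟫ - μ * ‖x‖^2 := by
      rw [← hTAdef]
      have : TA x = TB x - μ • x := by rw [hTBapp]; abel
      rw [this, inner_sub_right, real_inner_smul_right, real_inner_self_eq_norm_sq]
    have h2 : ⟪x, TB x⟫ = ∑ i, β i * (V.repr x i)^2 := by
      rw [innercoord]
      refine Finset.sum_congr rfl fun i _ => ?_
      rw [coordTB]; ring
    have h3 : ⟪b, x⟫ = ∑ i, β i * c i * V.repr x i := by
      rw [innercoord]
      refine Finset.sum_congr rfl fun i _ => ?_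
      rw [coordb]
    rw [h1, h2, h3, normsq x]
    simp only [Finset.mul_sum, ← Finset.sum_sub_distrib]
    exact Finset.sum_congr rfl fun i _ => by ring
  -- the Chebyshev polynomial
  obtain ⟨pp, hppdeg, hppbound⟩ := cheb_poly_exists k hk L hL
  set M : ℝ := L / ((k:ℝ)+1)^2 with hM
  have hk1 : (0:ℝ) < ((k:ℝ)+1)^2 := by positivity
  have hMpos : 0 < M := by positivity
  -- properties of q at eigenvalues
  set q : Fin n → ℝ := fun i => 1 - β i * pp.eval (β i) with hq
  have hqprop : ∀ i, 0 ≤ q i ∧ q i ≤ 1 ∧ β i * q i ≤ M := by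
    intro i
    obtain ⟨h1, h2, h3⟩ := hppbound (β i) (hβpos i) (hβhi i)
    exact ⟨h1, h2, h3⟩
  -- the candidate point
  set y : EuclideanSpace ℝ (Fin n) := (Polynomial.aeval TB pp) b with hy
  have ycoord : ∀ i, V.repr y i = (1 - q i) * c i := by
    intro i
    rw [hy, coordaeval, coordb, hq]
    ring
  -- membership in the Krylov subspace
  have hymem : y ∈ Submodule.span ℝ
      ((fun j : ℕ => Matrix.toEuclideanLin (A ^ j) b) '' Set.Iio k) := by
    have haevalTB : Polynomial.aeval TB pp
        = Polynomial.aeval TA (pp.comp (X + C μ)) := by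
      rw [Polynomial.aeval_comp]
      have : Polynomial.aeval TA (X + C μ) = TB := by
        rw [map_add, Polynomial.aeval_X, Polynomial.aeval_C, hTBdef,
          Algebra.algebraMap_eq_smul_one]
      rw [this]
    have hrdeg : (pp.comp (X + C μ)).natDegree < k := by
      refine lt_of_le_of_lt (le_trans natDegree_comp_le ?_) hppdeg
      have h1 : (X + C μ : ℝ[X]).natDegree ≤ 1 := by compute_degree
      calc pp.natDegree * (X + C μ : ℝ[X]).natDegree ≤ pp.natDegree * 1 :=
            Nat.mul_le_mul_left _ h1
        _ = pp.natDegree := by ring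
    rw [hy, haevalTB, Polynomial.aeval_eq_sum_range' hrdeg]
    rw [LinearMap.coe_sum, Finset.sum_apply]
    refine Submodule.sum_mem _ fun j hj => ?_
    rw [LinearMap.smul_apply]
    refine Submodule.smul_mem _ _ (Submodule.subset_span ?_)
    refine ⟨j, Set.mem_Iio.mpr (Finset.mem_range.mp hj), ?_⟩
    show Matrix.toEuclideanLin (A ^ j) b = (TA ^ j) b
    rw [toEuclideanLin_pow, hTAdef]
  -- feasibility
  have hsumc : ∑ i, (c i)^2 = Δ^2 := by
    rw [← hxstar, normsq xstar]
  have hynormsq : ‖y‖^2 = ∑ i, ((1 - q i) * c i)^2 := by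
    rw [normsq y]
    exact Finset.sum_congr rfl fun i _ => by rw [ycoord i]
  have hyfeas : ‖y‖ ≤ Δ := by
    have h1 : ‖y‖^2 ≤ Δ^2 := by
      rw [hynormsq, ← hsumc]
      refine Finset.sum_le_sum fun i _ => ?_
      obtain ⟨ha, hb2, _⟩ := hqprop i
      have h4 : (1 - q i)^2 ≤ 1 := by nlinarith
      nlinarith [mul_le_mul_of_nonneg_right h4 (sq_nonneg (c i))]
    nlinarith [norm_nonneg y]
  -- the key estimate
  have hkey : f y - f xstar ≤ 3/2 * M * Δ^2 := by
    have hcc : ∀ i, V.repr xstar i = c i := fun i => rfl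
    rw [fcoord y, fcoord xstar, ← Finset.sum_sub_distrib]
    have hterm : ∀ i ∈ Finset.univ, ((1/2) * (β i - μ) * (V.repr y i)^2
          - β i * c i * V.repr y i)
          - ((1/2) * (β i - μ) * (V.repr xstar i)^2 - β i * c i * V.repr xstar i)
        ≤ 3/2 * M * (c i)^2 := by
      intro i _
      rw [ycoord i, hcc i]
      obtain ⟨ha, hb2, hc3⟩ := hqprop i
      exact tr_perterm (β i) μ (q i) M (c i) ha hb2 hc3 (hβlo i) hμ
    refine le_trans (Finset.sum_le_sum hterm) ?_
    rw [← Finset.mul_sum, hsumc]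
  have hfxky : f xk ≤ f y := hmin y hymem hyfeas
  have hfirst : f xk - f xstar ≤ 3 * (lamn + μ) * Δ ^ 2 / (2 * ((k : ℝ) + 1) ^ 2) := by
    have : 3/2 * M * Δ^2 = 3 * (lamn + μ) * Δ ^ 2 / (2 * ((k : ℝ) + 1) ^ 2) := by
      rw [hM, hLdef]
      field_simp
      try ring
    linarith [hkey]
  refine ⟨hfirst, ?_⟩
  -- second bound
  have hf0 : f 0 = 0 := by
    rw [hf]
    simp
  have hfstar : f 0 - f xstar = ∑ i, (1/2) * (β i + μ) * (c i)^2 := by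
    rw [hf0, fcoord xstar, zero_sub, ← Finset.sum_neg_distrib]
    refine Finset.sum_congr rfl fun i _ => ?_
    have hcc : V.repr xstar i = c i := rfl
    rw [hcc]
    ring
  have hsumβ : 0 ≤ ∑ i, β i * (c i)^2 :=
    Finset.sum_nonneg fun i _ => mul_nonneg (hβpos i).le (sq_nonneg _)
  have hmuΔ : μ * Δ^2 ≤ 2 * (f 0 - f xstar) := by
    rw [hfstar, Finset.mul_sum]
    have : μ * Δ^2 = ∑ i, μ * (c i)^2 := by rw [← Finset.mul_sum, hsumc]
    rw [this]
    refine Finset.sum_le_sum fun i _ => ?_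
    have := hβlo i
    nlinarith [sq_nonneg (c i)]
  refine le_trans hfirst ?_
  rw [div_le_div_iff₀ (by positivity) (by positivity)]
  nlinarith [sq_nonneg ((k:ℝ)+1)]
end
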